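/- arXiv:1307.8289 — 2 statements merged into one kernel-verified Lean document; each statement's English description precedes it below -/
import Mathlib

section
/- Let λ be a strict partition with ℓ(λ) = r ≥ 1. Then S_{w_0}(read(T^λ)) = read(L^λ). -/
namespace QueerCrystal

/-- A word: a finite sequence of letters (we use natural numbers; letters lie in `{1,…,n}`). -/
abbrev Word := List ℕ

/-- All letters of `u` lie in `{1,…,n}`. -/
def InLetters (n : ℕ) (u : Word) : Prop := ∀ x ∈ u, 1 ≤ x ∧ x ≤ n

/-- Position (0-indexed) of the rightmost uncancelled `−` (a letter `i+1`) in the signature rule: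
letters `i` are `+`, letters `i+1` are `−`, and a `+` cancels a `−` to its right.
Scanning left to right, a `−` is uncancelled iff no unmatched `+` is currently available. -/
def epos (i : ℕ) (u : Word) : Option ℕ :=
  (((List.range u.length).zip u).foldl
    (fun (st : ℕ × Option ℕ) (p : ℕ × ℕ) =>
      if p.2 = i then (st.1 + 1, st.2)
      else if p.2 = i + 1 then
        (if st.1 = 0 then (0, some p.1) else (st.1 - 1, st.2))
      else st)
    ((0 : ℕ), (none : Option ℕ))).2

/-- Position (0-indexed) of the leftmost uncancelled `+` (a letter `i`) in the signature rule. -/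
def fpos (i : ℕ) (u : Word) : Option ℕ :=
  (((List.range u.length).zip u).foldr
    (fun (p : ℕ × ℕ) (st : ℕ × Option ℕ) =>
      if p.2 = i + 1 then (st.1 + 1, st.2)
      else if p.2 = i then
        (if st.1 = 0 then (0, some p.1) else (st.1 - 1, st.2))
      else st)
    ((0 : ℕ), (none : Option ℕ))).2

/-- The even Kashiwara operator `ẽᵢ` (`none` plays the role of `0`). -/
def ke (i : ℕ) (u : Word) : Option Word := (epos i u).map (fun k => u.set k i)

/-- The even Kashiwara operator `f̃ᵢ` (`none` plays the role of `0`). -/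
def kf (i : ℕ) (u : Word) : Option Word := (fpos i u).map (fun k => u.set k (i + 1))

/-- The largest position of `u` whose letter lies in `{1,2}`. -/
def pos12 (u : Word) : Option ℕ :=
  ((List.range u.length).zip u).foldl (fun (st : Option ℕ) (p : ℕ × ℕ) =>
    if p.2 = 1 ∨ p.2 = 2 then some p.1 else st) none

/-- The odd Kashiwara operator `ẽ_{1̄}`. -/
def keb (u : Word) : Option Word :=
  match pos12 u with
  | none => none
  | some k => if u.getD k 0 = 2 then some (u.set k 1) else none

/-- The odd Kashiwara operator `f̃_{1̄}`. -/
def kfb (u : Word) : Option Word :=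
  match pos12 u with
  | none => none
  | some k => if u.getD k 0 = 1 then some (u.set k 2) else none

/-- Iterate a partially defined operator. -/
def iterOp (g : Word → Option Word) : ℕ → Word → Option Word
  | 0, u => some u
  | k + 1, u => (g u).bind (iterOp g k)

/-- The Weyl-group operator `Sᵢ`: apply `f̃ᵢ^d` if `d = mᵢ − mᵢ₊₁ ≥ 0`, and `ẽᵢ^{−d}` otherwise. -/
def Si (i : ℕ) (u : Word) : Option Word :=
  if u.count (i + 1) ≤ u.count i
  then iterOp (kf i) (u.count i - u.count (i + 1)) u
  else iterOp (ke i) (u.count (i + 1) - u.count i) u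

/-- Apply the operators `S_j` for `j` running through `l` (head of `l` applied first). -/
def applyS (l : List ℕ) (o : Option Word) : Option Word :=
  l.foldl (fun acc j => acc.bind (Si j)) o

/-- Indices, in order of application, of the composite `S_2∘⋯∘S_i∘S_1∘⋯∘S_{i−1}`
(rightmost applied first): `[i−1,…,1, i,…,2]`. -/
def rseq (i : ℕ) : List ℕ :=
  ((List.range (i - 1)).reverse.map (· + 1)) ++ ((List.range (i - 1)).reverse.map (· + 2))

/-- Indices, in order of application, of the composite `S_{i−1}∘⋯∘S_1∘S_i∘⋯∘S_2`
(rightmost applied first): `[2,…,i, 1,…,i−1]`. -/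
def lseq (i : ℕ) : List ℕ :=
  ((List.range (i - 1)).map (· + 2)) ++ ((List.range (i - 1)).map (· + 1))

/-- The odd Kashiwara operator `ẽ_{ī}` (for `i = 1` this is `ẽ_{1̄}`). -/
def kebar (i : ℕ) (u : Word) : Option Word :=
  applyS (lseq i) ((applyS (rseq i) (some u)).bind keb)

/-- The odd Kashiwara operator `f̃_{ī}` (for `i = 1` this is `f̃_{1̄}`). -/
def kfbar (i : ℕ) (u : Word) : Option Word :=
  applyS (lseq i) ((applyS (rseq i) (some u)).bind kfb)

/-- `u` is a highest weight vector: `ẽᵢ u = 0` and `ẽ_{ī} u = 0` for all `i ∈ {1,…,n−1}`. -/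
def IsHW (n : ℕ) (u : Word) : Prop :=
  ∀ i, 1 ≤ i → i ≤ n - 1 → ke i u = none ∧ kebar i u = none

/-- Indices, in order of application, of
`S_{w₀} = S_1∘(S_2∘S_1)∘⋯∘(S_{n−1}∘⋯∘S_1)` (rightmost applied first). -/
def w0seq (n : ℕ) : List ℕ :=
  ((List.range (n - 1)).reverse.map (fun k => (List.range (k + 1)).map (· + 1))).flatten

/-- `u` is a lowest weight vector: `S_{w₀} u` is defined and is a highest weight vector. -/
def IsLW (n : ℕ) (u : Word) : Prop :=
  ∃ v, applyS (w0seq n) (some u) = some v ∧ IsHW n v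

/-- `u = u₁⋯u_N` is a hook word: nonempty, and for some (0-indexed) `k < N` we have
`u₁ ≥ ⋯ ≥ u_{k+1} < u_{k+2} < ⋯ < u_N`. -/
def IsHook (u : Word) : Prop :=
  u ≠ [] ∧ ∃ k < u.length,
    (∀ j, j < k → u.getD (j + 1) 0 ≤ u.getD j 0) ∧
    (∀ j, k ≤ j → j + 1 < u.length → u.getD j 0 < u.getD (j + 1) 0)

/-- A strict partition `(λ₁,…,λ_n)`, encoded as a function `ℕ → ℕ` supported on `{1,…,n}`:
weakly decreasing, and two consecutive equal parts must be zero. -/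
def IsStrictPartition (n : ℕ) (lam : ℕ → ℕ) : Prop :=
  lam 0 = 0 ∧ (∀ i, n < i → lam i = 0) ∧
  ∀ i, 1 ≤ i → i < n → lam (i + 1) ≤ lam i ∧ (0 < lam (i + 1) → lam (i + 1) < lam i)

/-- `ℓ(λ)`: the number of nonzero parts. -/
def ell (n : ℕ) (lam : ℕ → ℕ) : ℕ :=
  ((Finset.Icc 1 n).filter (fun i => lam i ≠ 0)).card

/-- `|λ| = λ₁ + ⋯ + λ_n`. -/
def sizeL (n : ℕ) (lam : ℕ → ℕ) : ℕ := ∑ i ∈ Finset.Icc 1 n, lam i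

/-- The `i`-th row (1-indexed) of a tableau, encoded as a list of rows (top row first). -/
def row (T : List Word) (i : ℕ) : Word := T.getD (i - 1) []

/-- `T` is a semistandard decomposition tableau of shape `λ`: it has `ℓ(λ)` rows, the `i`-th row
is a hook word of length `λᵢ` in the letters `{1,…,n}`, and no subsequence of `v_{i+1}v_i`
that is a hook word has length greater than `λᵢ`. -/
def IsSSDT (n : ℕ) (lam : ℕ → ℕ) (T : List Word) : Prop :=
  T.length = ell n lam ∧
  (∀ i, 1 ≤ i → i ≤ T.length →
    InLetters n (row T i) ∧ (row T i).length = lam i ∧ IsHook (row T i)) ∧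
  (∀ i, 1 ≤ i → i + 1 ≤ T.length →
    ∀ w : Word, w.Sublist (row T (i + 1) ++ row T i) → IsHook w → w.length ≤ lam i)

/-- The reading word `read(T) = v_r v_{r−1} ⋯ v_1`. -/
def readT (T : List Word) : Word := T.reverse.flatten

/-- The `i`-th row of `T^λ`:
`(r−i+1)^{λ_r} (r−i)^{λ_{r−1}−λ_r} ⋯ 1^{λ_i−λ_{i+1}}`. -/
def Trow (lam : ℕ → ℕ) (r i : ℕ) : Word :=
  ((List.range (r - i + 1)).reverse.map
    (fun s => List.replicate (lam (i + s) - lam (i + s + 1)) (s + 1))).flatten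

/-- The highest weight tableau `T^λ`. -/
def Ttab (n : ℕ) (lam : ℕ → ℕ) : List Word :=
  (List.range (ell n lam)).map (fun i0 => Trow lam (ell n lam) (i0 + 1))

/-- The lowest weight tableau `L^λ`, whose `i`-th row is `(n−i+1)^{λᵢ}`. -/
def Ltab (n : ℕ) (lam : ℕ → ℕ) : List Word :=
  (List.range (ell n lam)).map (fun i0 => List.replicate (lam (i0 + 1)) (n - i0))

/-- Length of the maximal weakly decreasing prefix. -/
def decLen : Word → ℕ
  | [] => 0
  | [_] => 1
  | a :: b :: t => if b ≤ a then decLen (b :: t) + 1 else 1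

/-- Boolean test for being strictly increasing. -/
def strIncB : Word → Bool
  | [] => true
  | [_] => true
  | a :: b :: t => decide (a < b) && strIncB (b :: t)

/-- Boolean test for being a hook word. -/
def isHookB (u : Word) : Bool := (!u.isEmpty) && strIncB (u.drop (decLen u - 1))

/-- Insertion of a letter `x` into a tableau (list of rows, top row first). -/
def insertOne : List Word → ℕ → List Word
  | [], x => [[x]]
  | v :: rest, x =>
    if isHookB (v ++ [x]) then (v ++ [x]) :: rest
    else
      let k := decLen v
      let j := k + (v.drop k).findIdx (fun a => decide (x ≤ a))
      let y := v.getD j 0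
      let j' := (v.take k).findIdx (fun a => decide (a < y))
      let z := v.getD j' 0
      ((v.set j x).set j' y) :: insertOne rest z

/-- Insertion of a word, letter by letter from the left. -/
def insertWord (T : List Word) (w : Word) : List Word := w.foldl insertOne T

/-- `T ← T' := T ← read(T')`. -/
def insertTab (T T' : List Word) : List Word := insertWord T (readT T')

/-- One application of a Kashiwara operator (`ẽᵢ, f̃ᵢ` for `i ∈ {1,…,n−1}`, or `ẽ_{1̄}, f̃_{1̄}`). -/
def Step (n : ℕ) (v w : Word) : Prop :=
  (∃ i, 1 ≤ i ∧ i ≤ n - 1 ∧ (ke i v = some w ∨ kf i v = some w)) ∨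
    keb v = some w ∨ kfb v = some w

/-- Membership in the connected component `C(u)`. -/
def InComp (n : ℕ) (u : Word) : Word → Prop := Relation.ReflTransGen (Step n) u

/-- The set of Kashiwara operators `ẽᵢ, f̃ᵢ` (`i ∈ {1,…,n−1}`), `ẽ_{1̄}, f̃_{1̄}`. -/
def OpSet (n : ℕ) : Set (Word → Option Word) :=
  {g | (∃ i, 1 ≤ i ∧ i ≤ n - 1 ∧ (g = ke i ∨ g = kf i)) ∨ g = keb ∨ g = kfb}

/-- `q(n)`-crystal equivalence of the words `u` and `v`: a weight-preserving bijection
`ψ : C(u) → C(v)` with `ψ(u) = v` commuting with all Kashiwara operators (including vanishing). -/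
def CrystalEquiv (n : ℕ) (u v : Word) : Prop :=
  ∃ ψ : Word → Word,
    ψ u = v ∧
    (∀ b, InComp n u b → InComp n v (ψ b)) ∧
    (∀ b b', InComp n u b → InComp n u b' → ψ b = ψ b' → b = b') ∧
    (∀ c, InComp n v c → ∃ b, InComp n u b ∧ ψ b = c) ∧
    (∀ b, InComp n u b → ∀ j, (ψ b).count j = b.count j) ∧
    (∀ g ∈ OpSet n, ∀ b, InComp n u b →
      ((g b = none ↔ g (ψ b) = none) ∧ ∀ w, g b = some w → g (ψ b) = some (ψ w)))

/-- The word `f̃_1(f̃_2(⋯(f̃_{j−1} b)⋯))` (for `j = 1` this is `b` itself). -/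
def fchain (j : ℕ) (b : Word) : Option Word :=
  ((List.range (j - 1)).reverse.map (· + 1)).foldl (fun o i => o.bind (kf i)) (some b)

end QueerCrystal

namespace Sw0Proof
open QueerCrystal

/-! ### Generic scan machinery for `fpos` -/

def stp (i : ℕ) (p : ℕ × ℕ) (st : ℕ × Option ℕ) : ℕ × Option ℕ :=
  if p.2 = i + 1 then (st.1 + 1, st.2)
  else if p.2 = i then (if st.1 = 0 then (0, some p.1) else (st.1 - 1, st.2))
  else st

def F (i s : ℕ) : Word → ℕ × Option ℕ → ℕ × Option ℕ
  | [], st => st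
  | a :: t, st => stp i (s, a) (F i (s + 1) t st)

lemma F_zip (i s : ℕ) (u : Word) (st : ℕ × Option ℕ) :
    ((List.range' s u.length).zip u).foldr (stp i) st = F i s u st := by
  induction u generalizing s with
  | nil => rfl
  | cons a t ih =>
    rw [List.length_cons, List.range'_succ, List.zip_cons_cons, List.foldr_cons, ih]
    rfl

lemma fpos_eq (i : ℕ) (u : Word) : fpos i u = (F i 0 u (0, none)).2 := by
  rw [fpos, List.range_eq_range', ← F_zip]
  rfl

lemma F_nil (i s : ℕ) (st : ℕ × Option ℕ) : F i s [] st = st := rfl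

lemma F_cons (i s a : ℕ) (t : Word) (st : ℕ × Option ℕ) :
    F i s (a :: t) st = stp i (s, a) (F i (s + 1) t st) := rfl

lemma F_append (i s : ℕ) (u v : Word) (st : ℕ × Option ℕ) :
    F i s (u ++ v) st = F i s u (F i (s + u.length) v st) := by
  induction u generalizing s with
  | nil => simp [F_nil]
  | cons a t ih =>
    rw [List.cons_append, F_cons, F_cons, ih, List.length_cons,
      show s + 1 + t.length = s + (t.length + 1) by omega]

lemma F_noop (i s : ℕ) (u : Word) (hu : ∀ x ∈ u, x ≠ i ∧ x ≠ i + 1)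
    (st : ℕ × Option ℕ) : F i s u st = st := by
  induction u generalizing s with
  | nil => rfl
  | cons a t ih =>
    have ha := hu a List.mem_cons_self
    rw [F_cons, ih (s + 1) (fun x hx => hu x (List.mem_cons_of_mem _ hx))]
    simp [stp, ha.1, ha.2]

lemma F_rep_minus (i s m p : ℕ) (k : Option ℕ) :
    F i s (List.replicate m (i + 1)) (p, k) = (p + m, k) := by
  induction m generalizing s with
  | zero => rfl
  | succ m ih =>
    rw [List.replicate_succ, F_cons, ih]
    simp [stp]
    all_goals omega

lemma F_rep_plus_le (i s m p : ℕ) (k : Option ℕ) (h : m ≤ p) :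
    F i s (List.replicate m i) (p, k) = (p - m, k) := by
  induction m generalizing s with
  | zero => simp [F_nil]
  | succ m ih =>
    rw [List.replicate_succ, F_cons, ih (s + 1) (by omega)]
    have h1 : ¬ (i = i + 1) := by omega
    have h2 : ¬ (p - m = 0) := by omega
    simp [stp, h1, h2]
    all_goals omega

lemma F_rep_plus_hit (i s m : ℕ) (k : Option ℕ) :
    F i s (List.replicate (m + 1) i) (0, k) = (0, some s) := by
  induction m generalizing s k with
  | zero =>
    rw [List.replicate_succ, F_cons]
    have h1 : ¬ (i = i + 1) := by omega
    simp [F_nil, stp, h1]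
  | succ m ih =>
    rw [List.replicate_succ, F_cons, ih (s + 1) k]
    have h1 : ¬ (i = i + 1) := by omega
    simp [stp, h1]

/-! ### Words made of runs of consecutive letters -/

def runsUp (f : ℕ → ℕ) (a : ℕ) : ℕ → Word
  | 0 => []
  | w + 1 => runsUp (fun c => f (c + 1)) (a + 1) w ++ List.replicate (f 0) a

lemma runsUp_eq (w : ℕ) : ∀ (f : ℕ → ℕ) (a : ℕ),
    runsUp f a w
      = ((List.range w).reverse.map (fun c => List.replicate (f c) (a + c))).flatten := by
  induction w with
  | zero => intro f a; rfl
  | succ w ih =>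
    intro f a
    rw [runsUp, ih]
    rw [List.range_succ_eq_map, List.reverse_cons, List.map_append, List.flatten_append]
    rw [← List.map_reverse, List.map_map]
    have hfun : ((fun c => List.replicate (f c) (a + c)) ∘ Nat.succ)
        = (fun c => List.replicate (f (c + 1)) (a + 1 + c)) := by
      funext c
      simp only [Function.comp]
      congr 1
      omega
    rw [hfun]
    simp

lemma mem_runsUp (w : ℕ) : ∀ (f : ℕ → ℕ) (a x : ℕ), x ∈ runsUp f a w → a ≤ x := by
  induction w with
  | zero => intro f a x hx; simp [runsUp] at hx
  | succ w ih =>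
    intro f a x hx
    rw [runsUp, List.mem_append] at hx
    rcases hx with h | h
    · have := ih _ _ _ h; omega
    · rw [List.eq_of_mem_replicate h]

lemma count_runsUp (w : ℕ) : ∀ (f : ℕ → ℕ), (∀ c, w ≤ c → f c = 0) → ∀ (a x : ℕ),
    (runsUp f a w).count x = if a ≤ x then f (x - a) else 0 := by
  induction w with
  | zero =>
    intro f hf a x
    have h0 : ∀ c, f c = 0 := fun c => hf c (Nat.zero_le c)
    simp [runsUp, h0]
  | succ w ih =>
    intro f hf a x
    have H := ih (fun c => f (c + 1)) (fun c hc => hf _ (by omega)) (a + 1) x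
    rw [runsUp, List.count_append, H, List.count_replicate]
    rcases lt_trichotomy x a with h | h | h
    · rw [if_neg (by omega), if_neg (by simp; omega), if_neg (by omega)]
    · rw [if_neg (by omega), if_pos (by simp [h]), if_pos (by omega)]
      subst h
      simp
    · rw [if_pos (by omega), if_neg (by simp; omega), if_pos (by omega)]
      have e : x - (a + 1) + 1 = x - a := by omega
      rw [e]
      simp

lemma F_runsUp (i : ℕ) (w : ℕ) : ∀ (f : ℕ → ℕ), (∀ c, w ≤ c → f c = 0) →
    ∀ (a s p : ℕ) (k : Option ℕ), (if a ≤ i then f (i - a) else 0) ≤ p →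
    F i s (runsUp f a w) (p, k)
      = (p - (if a ≤ i then f (i - a) else 0) + (if a ≤ i + 1 then f (i + 1 - a) else 0), k) := by
  induction w with
  | zero =>
    intro f hf a s p k hp
    have h0 : ∀ c, f c = 0 := fun c => hf c (Nat.zero_le c)
    simp [runsUp, F_nil, h0]
  | succ w ih =>
    intro f hf a s p k hp
    have hf' : ∀ c, w ≤ c → f (c + 1) = 0 := fun c hc => hf _ (by omega)
    rw [runsUp, F_append]
    rcases lt_trichotomy a i with hai | hai | hai
    · -- a < i : the run of letter a is inert
      rw [if_pos (by omega)] at hp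
      have hin : F i (s + (runsUp (fun c => f (c + 1)) (a + 1) w).length)
          (List.replicate (f 0) a) (p, k) = (p, k) :=
        F_noop _ _ _ (fun x hx => by rw [List.eq_of_mem_replicate hx]; omega) _
      rw [hin]
      have H := ih _ hf' (a + 1) s p k
      have e2 : i - (a + 1) + 1 = i - a := by omega
      have e3 : i + 1 - (a + 1) + 1 = i + 1 - a := by omega
      rw [if_pos (by omega), if_pos (by omega), e2, e3] at H
      rw [H hp, if_pos (by omega), if_pos (by omega)]
    · -- a = i : the run of letter a is a run of pluses
      subst hai
      rw [if_pos le_rfl, Nat.sub_self] at hp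
      rw [F_rep_plus_le _ _ _ _ _ hp]
      have H := ih _ hf' (a + 1) s (p - f 0) k
      rw [if_neg (by omega), if_pos (by omega)] at H
      have e2 : a + 1 - (a + 1) + 1 = 1 := by omega
      rw [e2] at H
      rw [H (by omega), if_pos le_rfl, if_pos (by omega), Nat.sub_self]
      have e3 : a + 1 - a = 1 := by omega
      rw [e3, Nat.sub_zero]
    · rcases Nat.eq_or_lt_of_le hai with hai' | hai'
      · -- a = i + 1 : the run of letter a is a run of minuses
        subst hai'
        rw [F_rep_minus]
        have H := ih _ hf' (i + 1 + 1) s (p + f 0) k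
        rw [if_neg (by omega), if_neg (by omega)] at H
        rw [H (by omega), if_neg (by omega), if_pos le_rfl, Nat.sub_self, Nat.sub_zero,
          Nat.sub_zero, Nat.add_zero]
      · -- i + 1 < a : everything inert
        have hin : F i (s + (runsUp (fun c => f (c + 1)) (a + 1) w).length)
            (List.replicate (f 0) a) (p, k) = (p, k) :=
          F_noop _ _ _ (fun x hx => by rw [List.eq_of_mem_replicate hx]; omega) _
        rw [hin]
        have H := ih _ hf' (a + 1) s p k
        rw [if_neg (by omega), if_neg (by omega)] at H
        rw [H (by omega), if_neg (by omega), if_neg (by omega), Nat.sub_zero, Nat.add_zero]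

/-! ### The key structure lemmas for `kf` and `Si` -/

/-- `A` absorbs `e` pending minuses (and never contributes an uncancelled plus). -/
def Absorbs (i e : ℕ) (A : Word) : Prop :=
  ∀ (s p : ℕ) (k : Option ℕ), e ≤ p → F i s A (p, k) = (p - e, k)

lemma absorbs_nil (i : ℕ) : Absorbs i 0 [] := by
  intro s p k _
  rw [F_nil, Nat.sub_zero]

lemma fpos_struct (i e c d : ℕ) (A B : Word) (hA : Absorbs i e A) (hec : e ≤ c)
    (hB : ∀ x ∈ B, x ≠ i ∧ x ≠ i + 1) :
    fpos i (A ++ (List.replicate c (i + 1) ++ (List.replicate (d + 1) i ++ B)))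
      = some (A.length + c) := by
  rw [fpos_eq, F_append, F_append, F_append]
  have h1 : F i (0 + A.length + (List.replicate c (i + 1)).length
      + (List.replicate (d + 1) i).length) B (0, none) = (0, none) := F_noop _ _ _ hB _
  rw [h1, F_rep_plus_hit, F_rep_minus, hA _ _ _ (by omega)]
  simp

lemma kf_struct (i e c d : ℕ) (A B : Word) (hA : Absorbs i e A) (hec : e ≤ c)
    (hB : ∀ x ∈ B, x ≠ i ∧ x ≠ i + 1) :
    kf i (A ++ (List.replicate c (i + 1) ++ (List.replicate (d + 1) i ++ B)))
      = some (A ++ (List.replicate (c + 1) (i + 1) ++ (List.replicate d i ++ B))) := by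
  rw [kf, fpos_struct i e c d A B hA hec hB, Option.map_some]
  congr 1
  have hw : A ++ (List.replicate c (i + 1) ++ (List.replicate (d + 1) i ++ B))
      = (A ++ List.replicate c (i + 1)) ++ (i :: (List.replicate d i ++ B)) := by
    rw [List.replicate_succ]
    simp [List.append_assoc]
  rw [hw]
  have hlen : A.length + c = (A ++ List.replicate c (i + 1)).length := by
    simp
  rw [hlen, List.set_append]
  rw [if_neg (by omega)]
  rw [Nat.sub_self, List.set_cons_zero]
  rw [List.replicate_succ']
  simp [List.append_assoc]

lemma iter_struct (i e : ℕ) (A B : Word) (hA : Absorbs i e A)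
    (hB : ∀ x ∈ B, x ≠ i ∧ x ≠ i + 1) :
    ∀ (d c : ℕ), e ≤ c →
    iterOp (kf i) d (A ++ (List.replicate c (i + 1) ++ (List.replicate d i ++ B)))
      = some (A ++ (List.replicate (c + d) (i + 1) ++ B)) := by
  intro d
  induction d with
  | zero =>
    intro c hc
    simp [iterOp]
  | succ d ih =>
    intro c hc
    show (kf i _).bind _ = _
    rw [kf_struct i e c d A B hA hc hB, Option.bind_some]
    have := ih (c + 1) (by omega)
    rw [this]
    have : c + 1 + d = c + (d + 1) := by omega
    rw [this]

lemma Si_struct (i e d : ℕ) (A B : Word) (hA : Absorbs i e A)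
    (hAc : A.count (i + 1) + e = A.count i)
    (hB : ∀ x ∈ B, x ≠ i ∧ x ≠ i + 1) :
    Si i (A ++ (List.replicate e (i + 1) ++ (List.replicate d i ++ B)))
      = some (A ++ (List.replicate (e + d) (i + 1) ++ B)) := by
  have hBc1 : B.count i = 0 := by
    rw [List.count_eq_zero]
    intro h
    exact (hB _ h).1 rfl
  have hBc2 : B.count (i + 1) = 0 := by
    rw [List.count_eq_zero]
    intro h
    exact (hB _ h).2 rfl
  have hne : ¬ ((i + 1 : ℕ) = i) := by omega
  have hc1 : (A ++ (List.replicate e (i + 1) ++ (List.replicate d i ++ B))).count i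
      = A.count i + d := by
    simp [List.count_append, List.count_replicate, hne, hBc1]
  have hc2 : (A ++ (List.replicate e (i + 1) ++ (List.replicate d i ++ B))).count (i + 1)
      = A.count (i + 1) + e := by
    have hne' : ¬ ((i : ℕ) = i + 1) := by omega
    simp [List.count_append, List.count_replicate, hne', hBc2]
  rw [Si, hc1, hc2, if_pos (by omega)]
  have hd : A.count i + d - (A.count (i + 1) + e) = d := by omega
  rw [hd]
  exact iter_struct i e A B hA hB d e le_rfl

/-! ### The family of intermediate words -/

section Family

variable (n : ℕ) (lam : ℕ → ℕ) (r : ℕ)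

/-- Row `v_j` of the residual tableau, `q = t + j - 1`. -/
def Rrow (q : ℕ) : Word := runsUp (fun c => lam (q + c + 1) - lam (q + c + 1 + 1)) 1 (r - q)

/-- Rows `v_s v_{s-1} ⋯ v_1` of the residual tableau, i.e. `Rrow (r-1) ⋯ Rrow q`. -/
def Pre (q : ℕ) : Word :=
  ((List.range (r - q)).map (fun j => Rrow lam r (r - 1 - j))).flatten

/-- The already-finished suffix `(n-t+1)^{λ_t} ⋯ n^{λ_1}`. -/
def Suf (t : ℕ) : Word :=
  ((List.range t).map (fun j => List.replicate (lam (t - j)) (n - t + j + 1))).flatten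

/-- The runs of letters `> i+1` of the currently evolving row. -/
def Hq (t i : ℕ) : Word :=
  runsUp (fun c => lam (t + i + c + 2) - lam (t + i + c + 2 + 1)) (i + 2) (r - t - (i + 1))

/-- The word after applying `S_1, …, S_i` within the block starting at `t`. -/
def Wrd (t i : ℕ) : Word :=
  Pre lam r (t + 1)
    ++ (Hq lam r t i ++ List.replicate (lam (t + 1) - lam (t + i + 2)) (i + 1))
    ++ Suf n lam t

lemma Pre_stop (q : ℕ) (h : r ≤ q) : Pre lam r q = [] := by
  unfold Pre
  rw [Nat.sub_eq_zero_of_le h]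
  rfl

lemma Pre_succ (q : ℕ) (h : q < r) : Pre lam r q = Pre lam r (q + 1) ++ Rrow lam r q := by
  unfold Pre
  have h1 : r - q = (r - (q + 1)) + 1 := by omega
  rw [h1, List.range_succ, List.map_append, List.flatten_append]
  have h2 : r - 1 - (r - (q + 1)) = q := by omega
  simp [h2]

lemma Suf_succ (t : ℕ) (h : t < n) :
    Suf n lam (t + 1) = List.replicate (lam (t + 1)) (n - t) ++ Suf n lam t := by
  unfold Suf
  rw [List.range_succ_eq_map, List.map_cons, List.flatten_cons, List.map_map]
  have h0 : n - (t + 1) + 0 + 1 = n - t := by omega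
  have h1 : t + 1 - 0 = t + 1 := by omega
  rw [h0, h1]
  congr 1
  congr 1
  apply List.map_congr_left
  intro j _
  simp only [Function.comp]
  have e1 : t + 1 - Nat.succ j = t - j := by omega
  have e2 : n - (t + 1) + Nat.succ j + 1 = n - t + j + 1 := by omega
  rw [e1, e2]

lemma mem_Suf (t x : ℕ) (hx : x ∈ Suf n lam t) : n - t + 1 ≤ x := by
  unfold Suf at hx
  rw [List.mem_flatten] at hx
  obtain ⟨l, hl, hxl⟩ := hx
  rw [List.mem_map] at hl
  obtain ⟨j, _, rfl⟩ := hl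
  rw [List.eq_of_mem_replicate hxl]
  omega

lemma Rrow_f_support (hzero : ∀ j : ℕ, r < j → lam j = 0) (q : ℕ) : ∀ c, r - q ≤ c → lam (q + c + 1) - lam (q + c + 1 + 1) = 0 := by
  intro c hc
  have h1 := hzero (q + c + 1) (by omega)
  omega

lemma Pre_count (hmono : ∀ a b : ℕ, 1 ≤ a → a ≤ b → lam b ≤ lam a)
    (hzero : ∀ j : ℕ, r < j → lam j = 0) : ∀ (m q : ℕ), r ≤ q + m → ∀ x, 1 ≤ x →
    (Pre lam r q).count x = lam (q + x) := by
  intro m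
  induction m with
  | zero =>
    intro q hq x hx
    rw [Pre_stop lam r q (by omega), List.count_nil, hzero (q + x) (by omega)]
  | succ m ih =>
    intro q hq x hx
    rcases Nat.lt_or_ge q r with h | h
    · rw [Pre_succ lam r q h, List.count_append, ih (q + 1) (by omega) x hx]
      unfold Rrow
      rw [count_runsUp (r - q) _ (Rrow_f_support lam r hzero q) 1 x, if_pos hx]
      have e1 : q + (x - 1) + 1 = q + x := by omega
      rw [e1]
      have h2 : lam (q + x + 1) ≤ lam (q + x) := hmono (q + x) (q + x + 1) (by omega) (by omega)
      have h3 : lam (q + 1 + x) = lam (q + x + 1) := by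
        congr 1
        omega
      rw [h3]
      omega
    · rw [Pre_stop lam r q h, List.count_nil, hzero (q + x) (by omega)]

lemma Pre_absorb (hmono : ∀ a b : ℕ, 1 ≤ a → a ≤ b → lam b ≤ lam a)
    (hzero : ∀ j : ℕ, r < j → lam j = 0) : ∀ (m q : ℕ), r ≤ q + m → ∀ i, 1 ≤ i →
    Absorbs i (lam (q + i) - lam (q + i + 1)) (Pre lam r q) := by
  intro m
  induction m with
  | zero =>
    intro q hq i hi
    rw [Pre_stop lam r q (by omega), hzero (q + i) (by omega), Nat.zero_sub]
    exact absorbs_nil i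
  | succ m ih =>
    intro q hq i hi
    rcases Nat.lt_or_ge q r with h | h
    · intro s p k hp
      rw [Pre_succ lam r q h, F_append]
      have hrow := F_runsUp i (r - q) _ (Rrow_f_support lam r hzero q) 1
        (s + (Pre lam r (q + 1)).length) p k
      rw [if_pos hi, if_pos (by omega)] at hrow
      have e1 : q + (i - 1) + 1 = q + i := by omega
      have e2 : q + (i + 1 - 1) + 1 = q + i + 1 := by omega
      rw [e1, e2] at hrow
      unfold Rrow
      rw [hrow hp]
      have hA := ih (q + 1) (by omega) i hi
      have e3 : q + 1 + i = q + i + 1 := by omega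
      rw [e3] at hA
      rw [hA s _ k (by omega)]
      simp only [Prod.mk.injEq]
      exact ⟨by omega, trivial⟩
    · rw [Pre_stop lam r q h, hzero (q + i) (by omega), Nat.zero_sub]
      exact absorbs_nil i

end Family

/-! ### The inner-block step -/

section Blocks

variable (n : ℕ) (lam : ℕ → ℕ) (r : ℕ)

lemma Hq_split (hzero : ∀ j : ℕ, r < j → lam j = 0) (t i : ℕ) :
    Hq lam r t i
      = Hq lam r t (i + 1) ++ List.replicate (lam (t + i + 2) - lam (t + i + 2 + 1)) (i + 2) := by
  rcases Nat.lt_or_ge (i + 1) (r - t) with h | h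
  · unfold Hq
    have hw : r - t - (i + 1) = (r - t - (i + 1 + 1)) + 1 := by omega
    rw [hw, runsUp]
    congr 1
    · congr 1
      funext c
      have e1 : t + i + (c + 1) + 2 = t + (i + 1) + c + 2 := by omega
      rw [e1]
  · have h1 : r - t - (i + 1) = 0 := by omega
    have h2 : r - t - (i + 1 + 1) = 0 := by omega
    have h3 : lam (t + i + 2) = 0 := hzero _ (by omega)
    unfold Hq
    rw [h1, h2, h3]
    simp [runsUp]

lemma Wrd_step (hmono : ∀ a b : ℕ, 1 ≤ a → a ≤ b → lam b ≤ lam a)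
    (hzero : ∀ j : ℕ, r < j → lam j = 0) (hrn : r ≤ n) (t i : ℕ) (ht : t < r)
    (hi : i + 1 ≤ n - 1 - t) :
    Si (i + 1) (Wrd n lam r t i) = some (Wrd n lam r t (i + 1)) := by
  have hmemH : ∀ x ∈ Hq lam r t (i + 1), i + 1 + 2 ≤ x := fun x hx => mem_runsUp _ _ _ _ hx
  have hAbs : Absorbs (i + 1) (lam (t + i + 2) - lam (t + i + 2 + 1))
      (Pre lam r (t + 1) ++ Hq lam r t (i + 1)) := by
    intro s p k hp
    rw [F_append]
    have hin : F (i + 1) (s + (Pre lam r (t + 1)).length) (Hq lam r t (i + 1)) (p, k) = (p, k) :=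
      F_noop _ _ _ (fun x hx => by have := hmemH x hx; omega) _
    rw [hin]
    have hP := Pre_absorb lam r hmono hzero r (t + 1) (by omega) (i + 1) (by omega)
    have e1 : t + 1 + (i + 1) = t + i + 2 := by omega
    rw [e1] at hP
    exact hP s p k hp
  have c1 : (Pre lam r (t + 1)).count (i + 1) = lam (t + i + 2) := by
    rw [Pre_count lam r hmono hzero r (t + 1) (by omega) (i + 1) (by omega)]
    congr 1
    omega
  have c2 : (Pre lam r (t + 1)).count (i + 1 + 1) = lam (t + i + 2 + 1) := by
    rw [Pre_count lam r hmono hzero r (t + 1) (by omega) (i + 1 + 1) (by omega)]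
    congr 1
    omega
  have c3 : (Hq lam r t (i + 1)).count (i + 1) = 0 :=
    List.count_eq_zero.mpr (fun hx => by have := hmemH _ hx; omega)
  have c4 : (Hq lam r t (i + 1)).count (i + 1 + 1) = 0 :=
    List.count_eq_zero.mpr (fun hx => by have := hmemH _ hx; omega)
  have hcnt : (Pre lam r (t + 1) ++ Hq lam r t (i + 1)).count (i + 1 + 1)
      + (lam (t + i + 2) - lam (t + i + 2 + 1))
      = (Pre lam r (t + 1) ++ Hq lam r t (i + 1)).count (i + 1) := by
    rw [List.count_append, List.count_append, c1, c2, c3, c4]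
    have h6 : lam (t + i + 2 + 1) ≤ lam (t + i + 2) :=
      hmono (t + i + 2) (t + i + 2 + 1) (by omega) (by omega)
    omega
  have hB : ∀ x ∈ Suf n lam t, x ≠ i + 1 ∧ x ≠ i + 1 + 1 := by
    intro x hx
    have := mem_Suf n lam t x hx
    omega
  have key := Si_struct (i + 1) (lam (t + i + 2) - lam (t + i + 2 + 1))
    (lam (t + 1) - lam (t + i + 2)) (Pre lam r (t + 1) ++ Hq lam r t (i + 1))
    (Suf n lam t) hAbs hcnt hB
  have heq : lam (t + i + 2) - lam (t + i + 2 + 1) + (lam (t + 1) - lam (t + i + 2))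
      = lam (t + 1) - lam (t + i + 2 + 1) := by
    have h6 : lam (t + i + 2 + 1) ≤ lam (t + i + 2) :=
      hmono (t + i + 2) (t + i + 2 + 1) (by omega) (by omega)
    have h7 : lam (t + i + 2) ≤ lam (t + 1) := hmono (t + 1) (t + i + 2) (by omega) (by omega)
    omega
  rw [heq] at key
  have hL : Wrd n lam r t i
      = Pre lam r (t + 1) ++ Hq lam r t (i + 1)
        ++ (List.replicate (lam (t + i + 2) - lam (t + i + 2 + 1)) (i + 1 + 1)
          ++ (List.replicate (lam (t + 1) - lam (t + i + 2)) (i + 1) ++ Suf n lam t)) := by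
    rw [Wrd, Hq_split lam r hzero t i]
    have : (i + 2) = (i + 1 + 1) := rfl
    rw [this]
    simp [List.append_assoc]
  have hR : Wrd n lam r t (i + 1)
      = Pre lam r (t + 1) ++ Hq lam r t (i + 1)
        ++ (List.replicate (lam (t + 1) - lam (t + i + 2 + 1)) (i + 1 + 1) ++ Suf n lam t) := by
    rw [Wrd]
    have e3 : t + (i + 1) + 2 = t + i + 2 + 1 := by omega
    rw [e3]
    simp [List.append_assoc]
  rw [hL, hR]
  exact key

lemma applyS_append (l1 l2 : List ℕ) (o : Option Word) :
    applyS (l1 ++ l2) o = applyS l2 (applyS l1 o) :=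
  List.foldl_append

lemma block_struct (hmono : ∀ a b : ℕ, 1 ≤ a → a ≤ b → lam b ≤ lam a)
    (hzero : ∀ j : ℕ, r < j → lam j = 0) (hrn : r ≤ n) (t : ℕ) (ht : t < r)
    (htn : t + 1 ≤ n - 1) :
    applyS ((List.range (n - 1 - t)).map (· + 1)) (some (Pre lam r t ++ Suf n lam t))
      = some (Pre lam r (t + 1) ++ Suf n lam (t + 1)) := by
  have start : Pre lam r t ++ Suf n lam t = Wrd n lam r t 0 := by
    rw [Wrd, Pre_succ lam r t ht]
    have hrow : Rrow lam r t
        = Hq lam r t 0 ++ List.replicate (lam (t + 1) - lam (t + 0 + 2)) (0 + 1) := by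
      rw [Rrow, Hq]
      have hw : r - t = (r - t - (0 + 1)) + 1 := by omega
      rw [hw, runsUp]
      rfl
    rw [hrow]
    try simp [List.append_assoc]
  have inner : ∀ j, j ≤ n - 1 - t →
      applyS ((List.range j).map (· + 1)) (some (Wrd n lam r t 0)) = some (Wrd n lam r t j) := by
    intro j
    induction j with
    | zero => intro _; rfl
    | succ j ihj =>
      intro hj
      rw [List.range_succ, List.map_append, applyS_append, ihj (by omega)]
      show (some (Wrd n lam r t j)).bind (Si (j + 1)) = _
      rw [Option.bind_some]
      exact Wrd_step n lam r hmono hzero hrn t j ht (by omega)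
  have endw : Wrd n lam r t (n - 1 - t) = Pre lam r (t + 1) ++ Suf n lam (t + 1) := by
    rw [Wrd]
    have h1 : Hq lam r t (n - 1 - t) = [] := by
      rw [Hq]
      have h0 : r - t - (n - 1 - t + 1) = 0 := by omega
      rw [h0]
      rfl
    have h2 : lam (t + (n - 1 - t) + 2) = 0 := hzero _ (by omega)
    have h3 : n - 1 - t + 1 = n - t := by omega
    rw [h1, h2, h3, Nat.sub_zero, Suf_succ n lam t (by omega)]
    simp
  rw [start, inner (n - 1 - t) le_rfl, endw]

lemma applyS_id (l : List ℕ) (u : Word) (h : ∀ j ∈ l, Si j u = some u) :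
    applyS l (some u) = some u := by
  induction l with
  | nil => rfl
  | cons a t ih =>
    show applyS t ((some u).bind (Si a)) = some u
    rw [Option.bind_some, h a List.mem_cons_self]
    exact ih (fun j hj => h j (List.mem_cons_of_mem _ hj))

lemma Si_id_of_absent (j : ℕ) (u : Word) (h1 : u.count j = 0) (h2 : u.count (j + 1) = 0) :
    Si j u = some u := by
  rw [Si, h1, h2, if_pos le_rfl]
  rfl

lemma block_triv (hzero : ∀ j : ℕ, r < j → lam j = 0) (t : ℕ) (hrt : r ≤ t) (htn : t < n) :
    applyS ((List.range (n - 1 - t)).map (· + 1)) (some (Pre lam r t ++ Suf n lam t))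
      = some (Pre lam r (t + 1) ++ Suf n lam (t + 1)) := by
  rw [Pre_stop lam r t hrt, Pre_stop lam r (t + 1) (by omega), List.nil_append, List.nil_append,
    Suf_succ n lam t htn, hzero (t + 1) (by omega)]
  rw [List.replicate_zero, List.nil_append]
  apply applyS_id
  intro j hj
  rw [List.mem_map] at hj
  obtain ⟨a, ha, rfl⟩ := hj
  rw [List.mem_range] at ha
  apply Si_id_of_absent
  · rw [List.count_eq_zero]
    intro hmem
    have := mem_Suf n lam t _ hmem
    omega
  · rw [List.count_eq_zero]
    intro hmem
    have := mem_Suf n lam t _ hmem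
    omega

lemma outer (hmono : ∀ a b : ℕ, 1 ≤ a → a ≤ b → lam b ≤ lam a)
    (hzero : ∀ j : ℕ, r < j → lam j = 0) (hrn : r ≤ n) (hn : 1 ≤ n) : ∀ m, m ≤ n - 1 →
    applyS (((List.range m).reverse.map (fun k => (List.range (k + 1)).map (· + 1))).flatten)
        (some (Pre lam r (n - 1 - m) ++ Suf n lam (n - 1 - m)))
      = some (Pre lam r (n - 1) ++ Suf n lam (n - 1)) := by
  intro m
  induction m with
  | zero => intro _; rfl
  | succ m ih =>
    intro hm
    have hl : ((List.range (m + 1)).reverse.map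
          (fun k => (List.range (k + 1)).map (· + 1))).flatten
        = ((List.range (m + 1)).map (· + 1))
          ++ ((List.range m).reverse.map (fun k => (List.range (k + 1)).map (· + 1))).flatten := by
      rw [List.range_succ, List.reverse_append]
      simp [List.range_succ, List.append_assoc]
    rw [hl, applyS_append]
    have hblk : applyS ((List.range (m + 1)).map (· + 1))
        (some (Pre lam r (n - 1 - (m + 1)) ++ Suf n lam (n - 1 - (m + 1))))
        = some (Pre lam r (n - 1 - m) ++ Suf n lam (n - 1 - m)) := by
      have e1 : n - 1 - (n - 1 - (m + 1)) = m + 1 := by omega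
      have e2 : n - 1 - (m + 1) + 1 = n - 1 - m := by omega
      rcases Nat.lt_or_ge (n - 1 - (m + 1)) r with h | h
      · have hb := block_struct n lam r hmono hzero hrn (n - 1 - (m + 1)) h (by omega)
        rw [e1, e2] at hb
        exact hb
      · have hb := block_triv n lam r hzero (n - 1 - (m + 1)) h (by omega)
        rw [e1, e2] at hb
        exact hb
    rw [hblk]
    exact ih (by omega)

lemma final_eq (hzero : ∀ j : ℕ, r < j → lam j = 0) (hrn : r ≤ n) (hn : 1 ≤ n) :
    Pre lam r (n - 1) ++ Suf n lam (n - 1) = Suf n lam r := by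
  rcases Nat.lt_or_ge (n - 1) r with h | h
  · -- here r = n
    have h1 : Pre lam r (n - 1) = Rrow lam r (n - 1) := by
      unfold Pre
      have e1 : r - (n - 1) = 1 := by omega
      rw [e1]
      have e2 : List.range 1 = [0] := rfl
      rw [e2, List.map_cons, List.map_nil, List.flatten_cons, List.flatten_nil, List.append_nil]
      congr 1
      omega
    have e0 : r = (n - 1) + 1 := by omega
    rw [h1, e0, Suf_succ n lam (n - 1) (by omega)]
    congr 1
    rw [Rrow]
    have e1 : r - (n - 1) = 1 := by omega
    rw [e0] at e1
    rw [e1, runsUp, runsUp, List.nil_append]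
    congr 1
    · have h4 : lam (n - 1 + 0 + 1 + 1) = 0 := hzero _ (by omega)
      have e2 : n - 1 + 0 + 1 = n - 1 + 1 := by omega
      rw [e2] at h4 ⊢
      omega
    · omega
  · rw [Pre_stop lam r (n - 1) h, List.nil_append]
    have hstable : ∀ k, r + k ≤ n → Suf n lam (r + k) = Suf n lam r := by
      intro k
      induction k with
      | zero => intro _; rfl
      | succ k ihk =>
        intro hk
        show Suf n lam ((r + k) + 1) = _
        rw [Suf_succ n lam (r + k) (by omega), hzero (r + k + 1) (by omega)]
        rw [List.replicate_zero, List.nil_append]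
        exact ihk (by omega)
    have e : n - 1 = r + (n - 1 - r) := by omega
    rw [e, hstable (n - 1 - r) (by omega)]

end Blocks

/-! ### Bridges to `readT`, `Ttab`, `Ltab` -/

lemma reverse_flatten_range (g : ℕ → Word) : ∀ m : ℕ,
    (((List.range m).map g).reverse).flatten
      = ((List.range m).map (fun j => g (m - 1 - j))).flatten := by
  intro m
  induction m generalizing g with
  | zero => rfl
  | succ m ih =>
    conv_lhs => rw [List.range_succ]
    rw [List.map_append, List.reverse_append]
    simp only [List.map_cons, List.map_nil, List.reverse_cons, List.reverse_nil,
      List.nil_append, List.cons_append, List.flatten_cons]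
    rw [ih g]
    conv_rhs => rw [List.range_succ_eq_map]
    simp only [List.map_cons, List.map_map, List.flatten_cons]
    have hfun : ((fun j => g (m + 1 - 1 - j)) ∘ Nat.succ) = (fun j => g (m - 1 - j)) := by
      funext j
      simp only [Function.comp]
      congr 1 <;> omega
    have hhead : g (m + 1 - 1 - 0) = g m := by congr 1 <;> omega
    rw [hfun, hhead]

section Bridge

variable (n : ℕ) (lam : ℕ → ℕ) (r : ℕ)

lemma Trow_eq_Rrow (q : ℕ) (h : q < r) : Trow lam r (q + 1) = Rrow lam r q := by
  rw [Trow, Rrow, runsUp_eq]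
  have e1 : r - (q + 1) + 1 = r - q := by omega
  rw [e1]
  congr 1
  congr 1
  funext c
  have e2 : q + 1 + c = q + c + 1 := by omega
  rw [e2]
  congr 1
  omega

lemma readT_Ttab (hre : r = ell n lam) : readT (Ttab n lam) = Pre lam r 0 := by
  rw [readT, Ttab, ← hre, reverse_flatten_range, Pre]
  congr 1
  apply List.map_congr_left
  intro j hj
  rw [List.mem_range] at hj
  exact Trow_eq_Rrow lam r (r - 1 - j) (by omega)

lemma readT_Ltab (hre : r = ell n lam) (hrn : r ≤ n) : readT (Ltab n lam) = Suf n lam r := by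
  rw [readT, Ltab, ← hre, reverse_flatten_range, Suf]
  congr 1
  apply List.map_congr_left
  intro j hj
  rw [List.mem_range] at hj
  have e1 : r - 1 - j + 1 = r - j := by omega
  have e2 : n - (r - 1 - j) = n - r + j + 1 := by omega
  rw [e1, e2]

end Bridge

end Sw0Proof

/-- `S_{w₀}(read(T^λ)) = read(L^λ)`. -/
theorem Sw0_Ttab_eq_Ltab (n : ℕ) (hn : 2 ≤ n) (lam : ℕ → ℕ)
    (hlam : QueerCrystal.IsStrictPartition n lam) (hell : 1 ≤ QueerCrystal.ell n lam) :
    QueerCrystal.applyS (QueerCrystal.w0seq n)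
        (some (QueerCrystal.readT (QueerCrystal.Ttab n lam)))
      = some (QueerCrystal.readT (QueerCrystal.Ltab n lam)) := by
  open QueerCrystal Sw0Proof in
  obtain ⟨h0, hbig, hstep⟩ := hlam
  set r := QueerCrystal.ell n lam with hre'
  have step1 : ∀ a : ℕ, 1 ≤ a → lam (a + 1) ≤ lam a := by
    intro a ha
    rcases Nat.lt_or_ge a n with h | h
    · exact (hstep a ha h).1
    · rw [hbig (a + 1) (by omega)]
      exact Nat.zero_le _
  have hmono : ∀ a b : ℕ, 1 ≤ a → a ≤ b → lam b ≤ lam a := by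
    intro a b ha hab
    induction b, hab using Nat.le_induction with
    | base => exact le_rfl
    | succ b hb ihb => exact le_trans (step1 b (by omega)) ihb
  have hrn : r ≤ n := by
    have h1 := Finset.card_filter_le (Finset.Icc 1 n) (fun i => lam i ≠ 0)
    rw [Nat.card_Icc] at h1
    have : QueerCrystal.ell n lam ≤ n + 1 - 1 := h1
    omega
  have hzero : ∀ j : ℕ, r < j → lam j = 0 := by
    intro j hj
    rcases Nat.lt_or_ge n j with h | h
    · exact hbig j h
    · by_contra hne
      have hsub : Finset.Icc 1 j ⊆ (Finset.Icc 1 n).filter (fun i => lam i ≠ 0) := by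
        intro x hx
        rw [Finset.mem_Icc] at hx
        rw [Finset.mem_filter, Finset.mem_Icc]
        refine ⟨⟨hx.1, le_trans hx.2 h⟩, ?_⟩
        have hmx := hmono x j hx.1 hx.2
        intro h0'
        apply hne
        omega
      have hcard := Finset.card_le_card hsub
      rw [Nat.card_Icc] at hcard
      have : j + 1 - 1 ≤ r := hcard
      omega
  have h1n : 1 ≤ n := by omega
  have key := Sw0Proof.outer n lam r hmono hzero hrn h1n (n - 1) le_rfl
  have e0 : n - 1 - (n - 1) = 0 := by omega
  rw [e0] at key
  have hS0 : Sw0Proof.Suf n lam 0 = [] := rfl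
  rw [hS0, List.append_nil] at key
  rw [Sw0Proof.final_eq n lam r hzero hrn h1n] at key
  rw [Sw0Proof.readT_Ttab n lam r hre', Sw0Proof.readT_Ltab n lam r hre' hrn]
  exact key
end

section
/- Let ℂ(q) be the field of rational functions over ℂ in the variable q. For every integer m ≥ 2 there is no f ∈ ℂ(q) with f² = (q^{2m} − q^{−2m})/(q² − q^{−2}); that is, the q-integer (q^{2m} − q^{−2m})/(q² − q^{−2}) is not a square in ℂ(q). -/
open Polynomial

/-- In `ℂ(q)`, the field of rational functions, the quantum integer
`(q^{2m} − q^{−2m})/(q² − q^{−2})` is not a square for any integer `m ≥ 2`. -/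
theorem qint_not_square_in_ratfunc (m : ℕ) (hm : 2 ≤ m) :
    ¬ ∃ f : RatFunc ℂ,
        f ^ 2 =
          ((RatFunc.X : RatFunc ℂ) ^ (2 * (m : ℤ)) -
              (RatFunc.X : RatFunc ℂ) ^ (-(2 * (m : ℤ)))) /
          ((RatFunc.X : RatFunc ℂ) ^ (2 : ℤ) - (RatFunc.X : RatFunc ℂ) ^ (-2 : ℤ)) := by
  obtain ⟨k, rfl⟩ : ∃ k, m = k + 2 := ⟨m - 2, by omega⟩
  rintro ⟨f, hf⟩
  set x : RatFunc ℂ := RatFunc.X with hxdef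
  have hx : x ≠ 0 := RatFunc.X_ne_zero
  set g : ℂ[X] →+* RatFunc ℂ := (algebraMap ℂ[X] (RatFunc ℂ)) with hgdef
  have hginj : Function.Injective g := RatFunc.algebraMap_injective ℂ
  set N : ℂ[X] := X ^ (4 * k + 8) - 1 with hNdef
  set D : ℂ[X] := X ^ (2 * k + 2) * (X ^ 4 - 1) with hDdef
  have hN0 : N ≠ 0 := by
    intro h
    have h1 := congrArg (Polynomial.eval 0) h
    have h2 : (0 : ℂ) ^ (4 * k + 8) = 0 := zero_pow (by omega)
    simp only [hNdef, eval_sub, eval_pow, eval_X, eval_one, eval_zero, h2] at h1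
    norm_num at h1
  have h41 : (X : ℂ[X]) ^ 4 - 1 ≠ 0 := by
    intro h
    have h1 := congrArg (Polynomial.eval 0) h
    simp [zero_pow] at h1
  have hD0 : D ≠ 0 := mul_ne_zero (pow_ne_zero _ Polynomial.X_ne_zero) h41
  have hgX : g X = x := RatFunc.algebraMap_X
  have hzpow1 : x ^ (2 * ((k + 2 : ℕ) : ℤ)) = x ^ (2 * k + 4) := by
    rw [show (2 * ((k + 2 : ℕ) : ℤ)) = ((2 * k + 4 : ℕ) : ℤ) by push_cast; ring, zpow_natCast]
  have hzpow2 : x ^ (-(2 * ((k + 2 : ℕ) : ℤ))) = (x ^ (2 * k + 4))⁻¹ := by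
    rw [zpow_neg, hzpow1]
  have hzpow3 : x ^ (2 : ℤ) = x ^ (2 : ℕ) := by
    rw [show (2 : ℤ) = ((2 : ℕ) : ℤ) by norm_num, zpow_natCast]
  have hzpow4 : x ^ (-2 : ℤ) = (x ^ (2 : ℕ))⁻¹ := by
    rw [show (-2 : ℤ) = -((2 : ℕ) : ℤ) by norm_num, zpow_neg, zpow_natCast]
  have hden : x ^ 2 - (x ^ 2)⁻¹ ≠ 0 := by
    intro h
    rw [sub_eq_zero] at h
    have h4 : x ^ 4 = 1 := by
      have h2 : x ^ 2 * x ^ 2 = x ^ 2 * (x ^ 2)⁻¹ := by rw [← h]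
      rw [mul_inv_cancel₀ (pow_ne_zero 2 hx)] at h2
      calc x ^ 4 = x ^ 2 * x ^ 2 := by ring
        _ = 1 := h2
    apply h41
    apply hginj
    rw [map_sub, map_pow, map_one, hgX, map_zero, h4, sub_self]
  have hxm : x ^ (2 * k + 4) ≠ 0 := pow_ne_zero _ hx
  have key : f ^ 2 * g D = g N := by
    rw [hf, hzpow1, hzpow2, hzpow3, hzpow4]
    rw [hDdef, hNdef, map_mul, map_sub, map_sub, map_pow, map_pow, map_pow,
      map_one, hgX]
    rw [div_mul_eq_mul_div, div_eq_iff hden]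
    field_simp
    ring
  set a : ℂ[X] := f.num with hadef
  set b : ℂ[X] := f.denom with hbdef
  have hb0 : b ≠ 0 := f.denom_ne_zero
  have hgb : g b ≠ 0 := fun h => hb0 (hginj (by rwa [map_zero]))
  have hfab : f * g b = g a := by
    conv_lhs => rw [← RatFunc.num_div_denom f]
    exact div_mul_cancel₀ _ hgb
  have hpoly : a ^ 2 * D = N * b ^ 2 := by
    apply hginj
    calc g (a ^ 2 * D) = (g a) ^ 2 * g D := by rw [map_mul, map_pow]
      _ = (f * g b) ^ 2 * g D := by rw [hfab]
      _ = (f ^ 2 * g D) * (g b) ^ 2 := by ring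
      _ = g N * (g b) ^ 2 := by rw [key]
      _ = g (N * b ^ 2) := by rw [map_mul, map_pow]
  have ha0 : a ≠ 0 := by
    intro h
    have h0 : (0 : ℂ[X]) = N * b ^ 2 := by rw [← hpoly, h]; ring
    rcases mul_eq_zero.mp h0.symm with h' | h'
    · exact hN0 h'
    · exact hb0 ((pow_eq_zero_iff (n := 2) (by norm_num)).mp h')
  -- a primitive (4k+8)-th root of unity
  obtain ⟨ζ, hζ⟩ : ∃ ζ : ℂ, IsPrimitiveRoot ζ (4 * k + 8) :=
    ⟨_, Complex.isPrimitiveRoot_exp (4 * k + 8) (by omega)⟩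
  have hζ0 : ζ ≠ 0 := hζ.ne_zero (by omega)
  have hζn : ζ ^ (4 * k + 8) = 1 := hζ.pow_eq_one
  have hζ4 : ζ ^ 4 ≠ 1 := by
    intro h
    have hdvd := hζ.dvd_of_pow_eq_one 4 h
    have := Nat.le_of_dvd (by norm_num) hdvd
    omega
  have hDm : rootMultiplicity ζ D = 0 := by
    apply rootMultiplicity_eq_zero
    simp only [IsRoot, hDdef, eval_mul, eval_sub, eval_pow, eval_one, eval_X]
    exact mul_ne_zero (pow_ne_zero _ hζ0) (sub_ne_zero.mpr hζ4)
  have hNsep : Separable N := by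
    have hn : ((4 * k + 8 : ℕ) : ℂ) ≠ 0 := Nat.cast_ne_zero.mpr (by omega)
    have := Polynomial.separable_X_pow_sub_C (F := ℂ) (n := 4 * k + 8) 1 hn one_ne_zero
    simpa [hNdef] using this
  have hNm : rootMultiplicity ζ N = 1 := by
    have hroot : IsRoot N ζ := by
      simp [IsRoot, hNdef, hζn]
    have h1 : 1 ≤ rootMultiplicity ζ N := (rootMultiplicity_pos hN0).mpr hroot
    have h2 : rootMultiplicity ζ N ≤ 1 :=
      rootMultiplicity_le_one_of_separable hNsep ζ
    omega
  have hmul : rootMultiplicity ζ (a ^ 2 * D) = rootMultiplicity ζ (N * b ^ 2) := by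
    rw [hpoly]
  rw [rootMultiplicity_mul (mul_ne_zero (pow_ne_zero _ ha0) hD0),
      rootMultiplicity_mul (mul_ne_zero hN0 (pow_ne_zero _ hb0)),
      show a ^ 2 = a * a from sq a, show b ^ 2 = b * b from sq b,
      rootMultiplicity_mul (mul_ne_zero ha0 ha0),
      rootMultiplicity_mul (mul_ne_zero hb0 hb0), hDm, hNm] at hmul
  omega
end
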